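/- arXiv:1903.10455 — 3 statements merged into one kernel-verified Lean document; each statement's English description precedes it below -/
import Mathlib

section
/- Let μ be a Borel probability measure on [0,1] and A a positive definite n×n complex matrix. Then the Fréchet derivative of the map X ↦ φ_μ(A,X), defined on positive definite matrices, vanishes at X = A; that is, D(φ_μ(A,·))(A)[Y] = 0 for every Hermitian matrix Y. -/
open MeasureTheory Matrix
open scoped ComplexOrder

/-- `f_μ(x) = ∫_{[0,1]} x / ((1-λ)x + λ) dμ(λ)`. -/
noncomputable def fmu (μ : Measure ℝ) (x : ℝ) : ℝ := ∫ l, x / ((1 - l) * x + l) ∂μ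

/-- The center of mass `c(μ) = ∫_{[0,1]} λ dμ(λ)`. -/
noncomputable def cmu (μ : Measure ℝ) : ℝ := ∫ l, l ∂μ

/-- The positive square root of a positive definite matrix, via functional calculus. -/
noncomputable def matSqrt {n : ℕ} (A : Matrix (Fin n) (Fin n) ℂ) : Matrix (Fin n) (Fin n) ℂ :=
  cfc Real.sqrt A

/-- The Kubo–Ando mean `A σ_μ B = A^{1/2} f_μ(A^{-1/2} B A^{-1/2}) A^{1/2}`. -/
noncomputable def kuboAndo {n : ℕ} (μ : Measure ℝ) (A B : Matrix (Fin n) (Fin n) ℂ) :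
    Matrix (Fin n) (Fin n) ℂ :=
  matSqrt A * cfc (fmu μ) ((matSqrt A)⁻¹ * B * (matSqrt A)⁻¹) * matSqrt A

/-- The generalized quantum Hellinger divergence
`φ_μ(A,B) = Tr((1-c(μ))A + c(μ)B - A σ_μ B)`. -/
noncomputable def qhd {n : ℕ} (μ : Measure ℝ) (A B : Matrix (Fin n) (Fin n) ℂ) : ℝ :=
  (((1 - cmu μ) • A + cmu μ • B - kuboAndo μ A B).trace).re

-- every real function is continuous on a finite set
lemma continuousOn_of_finite' {s : Set ℝ} (hs : s.Finite) (f : ℝ → ℝ) : ContinuousOn f s := by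
  have := hs.to_subtype
  rw [continuousOn_iff_continuous_restrict]
  exact continuous_of_discreteTopology

lemma contOn_spec {n : ℕ} (f : ℝ → ℝ) (M : Matrix (Fin n) (Fin n) ℂ) :
    ContinuousOn f (spectrum ℝ M) :=
  continuousOn_of_finite' (Matrix.finite_real_spectrum (A := M)) f

lemma contOn_image {n : ℕ} (f g : ℝ → ℝ) (M : Matrix (Fin n) (Fin n) ℂ) :
    ContinuousOn f (g '' spectrum ℝ M) :=
  continuousOn_of_finite' ((Matrix.finite_real_spectrum (A := M)).image g) f

lemma fmu_hasDerivAt_s1 (μ : Measure ℝ) [IsProbabilityMeasure μ]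
    (hμ01 : μ (Set.Icc (0 : ℝ) 1) = 1) : HasDerivAt (fmu μ) (cmu μ) 1 := by
  have hae : ∀ᵐ l ∂μ, l ∈ Set.Icc (0:ℝ) 1 := by
    rw [ae_iff]
    have : {l : ℝ | ¬ l ∈ Set.Icc (0:ℝ) 1} = (Set.Icc (0:ℝ) 1)ᶜ := rfl
    rw [this, prob_compl_eq_zero_iff measurableSet_Icc]
    exact hμ01
  set F : ℝ → ℝ → ℝ := fun x l => x / ((1 - l) * x + l) with hF
  set F' : ℝ → ℝ → ℝ := fun x l => l / ((1 - l) * x + l) ^ 2 with hF'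
  have hden : ∀ l ∈ Set.Icc (0:ℝ) 1, ∀ x ∈ Metric.ball (1:ℝ) (1/2),
      (1/2 : ℝ) ≤ (1 - l) * x + l := by
    rintro l ⟨hl0, hl1⟩ x hx
    rw [Metric.mem_ball, Real.dist_eq, abs_sub_lt_iff] at hx
    nlinarith
  have key := hasDerivAt_integral_of_dominated_loc_of_deriv_le (μ := μ) (F := F) (F' := F')
      (x₀ := (1:ℝ)) (bound := fun _ => (4:ℝ)) (s := Metric.ball (1:ℝ) (1/2)) (Metric.ball_mem_nhds _ (by norm_num))
      ?_ ?_ ?_ ?_ ?_ ?_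
  · have h1 : F' 1 = fun l => l := by
      funext l; simp only [hF']; norm_num
    have h2 : (∫ l, F' 1 l ∂μ) = cmu μ := by rw [h1]; rfl
    exact h2 ▸ key.2
  · filter_upwards with x
    apply Measurable.aestronglyMeasurable
    apply Measurable.div measurable_const
    fun_prop
  · have : F 1 = fun _ => (1:ℝ) := by funext l; simp only [hF]; norm_num
    rw [this]; exact integrable_const 1
  · apply Measurable.aestronglyMeasurable
    apply Measurable.div measurable_id
    fun_prop
  · filter_upwards [hae] with l hl x hx
    have hd := hden l hl x hx
    have hl0 : (0:ℝ) ≤ l := hl.1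
    have hl1 : l ≤ 1 := hl.2
    have h2 : (1/2:ℝ)^2 ≤ ((1 - l) * x + l)^2 := by nlinarith
    rw [Real.norm_eq_abs, abs_div, abs_of_nonneg hl0, abs_of_nonneg (by positivity)]
    rw [div_le_iff₀ (by nlinarith)]
    nlinarith
  · exact integrable_const 4
  · filter_upwards [hae] with l hl x hx
    have hd := hden l hl x hx
    have hne : (1 - l) * x + l ≠ 0 := by linarith
    have hu : HasDerivAt (fun y : ℝ => y) 1 x := hasDerivAt_id x
    have hv : HasDerivAt (fun y : ℝ => (1 - l) * y + l) (1 - l) x := by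
      simpa using ((hasDerivAt_id x).const_mul (1 - l)).add_const l
    have hder := hu.div hv hne
    have h3 : (1 * ((1 - l) * x + l) - x * (1 - l)) = l := by ring
    rw [h3] at hder
    exact hder

lemma fmu_comp_hasDerivAt (μ : Measure ℝ) [IsProbabilityMeasure μ]
    (hμ01 : μ (Set.Icc (0 : ℝ) 1) = 1) (d : ℝ) :
    HasDerivAt (fun t : ℝ => fmu μ (1 + t * d)) (cmu μ * d) 0 := by
  have h1 : HasDerivAt (fun t : ℝ => 1 + t * d) d 0 := by
    simpa using ((hasDerivAt_id (0:ℝ)).mul_const d).const_add 1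
  have h2 : HasDerivAt (fmu μ) (cmu μ) ((fun t : ℝ => 1 + t * d) 0) := by
    simpa using fmu_hasDerivAt_s1 μ hμ01
  exact h2.comp 0 h1

lemma trace_diag_mul {n : ℕ} (w : Fin n → ℂ) (B : Matrix (Fin n) (Fin n) ℂ) :
    (Matrix.diagonal w * B).trace = ∑ i, w i * B i i := by
  simp [Matrix.trace, Matrix.diag, Matrix.diagonal_mul]

lemma herm_cfc_repr {n : ℕ} {C : Matrix (Fin n) (Fin n) ℂ} (hC : C.IsHermitian) :
    ∃ (U : Matrix (Fin n) (Fin n) ℂ) (d : Fin n → ℝ),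
      C = U * Matrix.diagonal (fun i => (d i : ℂ)) * star U ∧
      ∀ g : ℝ → ℝ, cfc g C = U * Matrix.diagonal (fun i => (g (d i) : ℂ)) * star U := by
  refine ⟨hC.eigenvectorUnitary, hC.eigenvalues, ?_, fun g => ?_⟩
  · conv_lhs => rw [hC.spectral_theorem]
    rfl
  · rw [hC.cfc_eq g]
    rfl

/-- The Fréchet derivative of `X ↦ φ_μ(A,X)` vanishes at `X = A`: for every
Hermitian direction `Y`, the directional derivative `D(φ_μ(A,·))(A)[Y]` exists and is `0`. -/
theorem qhd_deriv_at_diagonal_eq_zero {n : ℕ} (μ : Measure ℝ) [IsProbabilityMeasure μ]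
    (hμ01 : μ (Set.Icc (0 : ℝ) 1) = 1)
    (A : Matrix (Fin n) (Fin n) ℂ) (hA : A.PosDef) :
    ∀ Y : Matrix (Fin n) (Fin n) ℂ, Y.IsHermitian →
      HasDerivAt (fun t : ℝ => qhd μ A (A + t • Y)) 0 0 := by
  classical
  intro Y hY
  have hAH : A.IsHermitian := hA.1
  have hAsa : IsSelfAdjoint A := hAH.isSelfAdjoint
  have hSsa : IsSelfAdjoint (matSqrt A) := cfc_predicate Real.sqrt A
  set S := matSqrt A with hSdef
  have hSH : S.IsHermitian := by
    show Sᴴ = S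
    rw [← Matrix.star_eq_conjTranspose]
    exact hSsa
  have hspecA : ∀ x ∈ spectrum ℝ A, (0:ℝ) < x := by
    rw [Matrix.IsHermitian.spectrum_real_eq_range_eigenvalues hAH]
    rintro x ⟨i, rfl⟩
    exact hA.eigenvalues_pos i
  have hSS : S * S = A := by
    rw [hSdef, matSqrt, ← cfc_mul Real.sqrt Real.sqrt A (contOn_spec _ _) (contOn_spec _ _)]
    rw [cfc_congr (g := fun x : ℝ => x) (fun x hx => Real.mul_self_sqrt (hspecA x hx).le)]
    exact cfc_id' ℝ A
  have hdetS : IsUnit S.det := by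
    have h1 : IsUnit (S.det * S.det) := by
      rw [← Matrix.det_mul, hSS]
      exact (Matrix.isUnit_iff_isUnit_det A).mp hA.isUnit
    exact isUnit_of_mul_isUnit_left h1
  have hS1 : S⁻¹ * S = 1 := Matrix.nonsing_inv_mul S hdetS
  have hS2 : S * S⁻¹ = 1 := Matrix.mul_nonsing_inv S hdetS
  have hSAS : S⁻¹ * A * S⁻¹ = 1 := by
    rw [← hSS, ← Matrix.mul_assoc S⁻¹ S S, hS1, Matrix.one_mul, hS2]
  have hSiH : (S⁻¹).IsHermitian := hSH.inv
  have hC : (S⁻¹ * Y * S⁻¹).IsHermitian := by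
    show (S⁻¹ * Y * S⁻¹)ᴴ = S⁻¹ * Y * S⁻¹
    rw [Matrix.conjTranspose_mul, Matrix.conjTranspose_mul, hSiH.eq, hY.eq, Matrix.mul_assoc]
  set C := S⁻¹ * Y * S⁻¹ with hCdef
  have hCsa : IsSelfAdjoint C := hC.isSelfAdjoint
  obtain ⟨U, d, hspecC, hcfcC⟩ := herm_cfc_repr hC
  -- trace helpers
  have htrS : ∀ X : Matrix (Fin n) (Fin n) ℂ, (S * X * S).trace = (X * A).trace := by
    intro X
    rw [Matrix.trace_mul_cycle, hSS, Matrix.trace_mul_comm]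
  have hUtr : ∀ w : Fin n → ℂ,
      (U * Matrix.diagonal w * star U * A).trace = ∑ i, w i * (star U * A * U) i i := by
    intro w
    have h1 : U * Matrix.diagonal w * star U * A
        = U * (Matrix.diagonal w * (star U * A)) := by
      simp only [Matrix.mul_assoc]
    rw [h1, Matrix.trace_mul_comm, Matrix.mul_assoc, trace_diag_mul]
  -- the pointwise formula
  have hform : ∀ t : ℝ, qhd μ A (A + t • Y)
      = (A.trace).re + t * (cmu μ * (Y.trace).re)
        - ∑ i, ((star U * A * U) i i).re * fmu μ (1 + t * d i) := by
    intro t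
    have harg : S⁻¹ * (A + t • Y) * S⁻¹ = 1 + t • C := by
      rw [Matrix.mul_add, Matrix.add_mul, hSAS, Matrix.mul_smul, Matrix.smul_mul, hCdef]
    have hone : cfc (fun x : ℝ => 1 + t * x) C = (1 : Matrix (Fin n) (Fin n) ℂ) + t • C := by
      calc cfc (fun x : ℝ => 1 + t * x) C
          = cfc (fun _ : ℝ => (1:ℝ)) C + cfc (fun x : ℝ => t * x) C :=
            cfc_add (a := C) _ _ (contOn_spec _ _) (contOn_spec _ _)
        _ = 1 + t • C := by
            rw [cfc_const_one ℝ (a := C) hCsa, cfc_const_mul_id t C hCsa]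
    have hcomp : cfc (fmu μ) (1 + t • C)
        = U * Matrix.diagonal (fun i => ((fmu μ (1 + t * d i) : ℝ) : ℂ)) * star U := by
      rw [← hone, ← cfc_comp (fmu μ) (fun x : ℝ => 1 + t * x) C hCsa
        (contOn_image _ _ _) (contOn_spec _ _)]
      exact hcfcC _
    have hq : qhd μ A (A + t • Y)
        = (((1 - cmu μ) • A + cmu μ • (A + t • Y)
            - S * cfc (fmu μ) (S⁻¹ * (A + t • Y) * S⁻¹) * S).trace).re := by
      rw [qhd, kuboAndo, ← hSdef]
    rw [hq, harg, hcomp, Matrix.trace_sub, Matrix.trace_add, Matrix.trace_smul,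
      Matrix.trace_smul, Matrix.trace_add, Matrix.trace_smul, htrS, hUtr]
    rw [Complex.sub_re, Complex.add_re]
    simp only [Complex.real_smul, Complex.re_ofReal_mul, Complex.add_re, Complex.re_sum,
      Complex.re_ofReal_mul]
    have hcomm : ∀ i : Fin n, fmu μ (1 + t * d i) * ((star U * A * U) i i).re
        = ((star U * A * U) i i).re * fmu μ (1 + t * d i) := fun i => mul_comm _ _
    simp only [hcomm]
    ring
  have hsum : ∑ i, ((star U * A * U) i i).re * d i = (Y.trace).re := by
    have hYC : (C * A).trace = Y.trace := by
      have h1 : C * A = S⁻¹ * (Y * (S⁻¹ * A)) := by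
        rw [hCdef]; simp only [Matrix.mul_assoc]
      rw [h1, Matrix.trace_mul_comm, Matrix.mul_assoc, hSAS, Matrix.mul_one]
    have h2 : (Y.trace).re = (∑ i, ((d i : ℝ) : ℂ) * (star U * A * U) i i).re := by
      rw [← hYC]
      conv_lhs => rw [hspecC]
      rw [hUtr]
    rw [h2, Complex.re_sum]
    refine Finset.sum_congr rfl fun i _ => ?_
    rw [Complex.re_ofReal_mul, mul_comm]
  -- assemble the derivative
  have h1 : HasDerivAt (fun t : ℝ => (A.trace).re + t * (cmu μ * (Y.trace).re))
      (cmu μ * (Y.trace).re) 0 := by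
    simpa using ((hasDerivAt_id (0:ℝ)).mul_const (cmu μ * (Y.trace).re)).const_add ((A.trace).re)
  have h2 : HasDerivAt (fun t : ℝ => ∑ i, ((star U * A * U) i i).re * fmu μ (1 + t * d i))
      (∑ i, ((star U * A * U) i i).re * (cmu μ * d i)) 0 :=
    HasDerivAt.fun_sum fun i _ => (fmu_comp_hasDerivAt μ hμ01 (d i)).const_mul (((star U * A * U) i i).re)
  have h3 := h1.sub h2
  have hzero : cmu μ * (Y.trace).re - ∑ i, ((star U * A * U) i i).re * (cmu μ * d i) = 0 := by
    have h4 : ∑ i, ((star U * A * U) i i).re * (cmu μ * d i)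
        = cmu μ * ∑ i, ((star U * A * U) i i).re * d i := by
      rw [Finset.mul_sum]
      refine Finset.sum_congr rfl fun i _ => ?_
      ring
    rw [h4, hsum, sub_self]
  rw [hzero] at h3
  have hfun : (fun t : ℝ => qhd μ A (A + t • Y))
      = fun t : ℝ => (A.trace).re + t * (cmu μ * (Y.trace).re)
          - ∑ i, ((star U * A * U) i i).re * fmu μ (1 + t * d i) := by
    funext t
    exact hform t
  rw [hfun]
  exact h3
end

section
/- Let μ be a Borel probability measure on [0,1] and let T be a linear map from n×n complex matrices to n×n complex matrices that is completely positive and trace preserving (a quantum channel) and maps positive definite matrices to positive definite matrices. Then for all positive definite n×n complex matrices A, B, the data processing inequality φ_μ(T(A), T(B)) ≤ φ_μ(A, B) holds. -/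
open MeasureTheory Matrix
open scoped ComplexOrder

/-- The map `T ⊗ id_k` acting on `nk × nk` block matrices: the `(i,j)` block-entry pattern of
the result is obtained by applying `T` slice-wise. -/
noncomputable def tensorId {n : ℕ}
    (T : Matrix (Fin n) (Fin n) ℂ →ₗ[ℂ] Matrix (Fin n) (Fin n) ℂ) (k : ℕ)
    (M : Matrix (Fin n × Fin k) (Fin n × Fin k) ℂ) :
    Matrix (Fin n × Fin k) (Fin n × Fin k) ℂ :=
  fun p q => T (fun i j => M (i, p.2) (j, q.2)) p.1 q.1

/-- `T` is completely positive: for every `k`, `T ⊗ id_k` maps positive semidefinite matrices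
to positive semidefinite matrices. -/
def IsCompletelyPositive {n : ℕ}
    (T : Matrix (Fin n) (Fin n) ℂ →ₗ[ℂ] Matrix (Fin n) (Fin n) ℂ) : Prop :=
  ∀ (k : ℕ) (M : Matrix (Fin n × Fin k) (Fin n × Fin k) ℂ),
    M.PosSemidef → (tensorId T k M).PosSemidef

variable {n : ℕ}

lemma spectrum_pos {A : Matrix (Fin n) (Fin n) ℂ} (hA : A.PosDef) :
    ∀ x ∈ spectrum ℝ A, 0 < x := by
  intro x hx
  rw [hA.1.spectrum_real_eq_range_eigenvalues] at hx
  obtain ⟨i, rfl⟩ := hx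
  exact hA.eigenvalues_pos i

lemma contOn (f : ℝ → ℝ) {A : Matrix (Fin n) (Fin n) ℂ} :
    ContinuousOn f (spectrum ℝ A) := by
  rw [continuousOn_iff_continuous_restrict]
  have : Finite (spectrum ℝ A) := A.finite_real_spectrum
  exact continuous_of_discreteTopology

lemma matSqrt_mul_self {A : Matrix (Fin n) (Fin n) ℂ} (hA : A.PosDef) :
    matSqrt A * matSqrt A = A :=
  calc matSqrt A * matSqrt A
      = cfc (fun x : ℝ => Real.sqrt x * Real.sqrt x) A :=
        (cfc_mul _ _ A (contOn _) (contOn _)).symm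
    _ = cfc (id : ℝ → ℝ) A :=
        cfc_congr fun x hx => Real.mul_self_sqrt (spectrum_pos hA x hx).le
    _ = A := cfc_id ℝ A hA.1

lemma conj_posDef {P X : Matrix (Fin n) (Fin n) ℂ} (hP : P.PosDef) (hX : IsUnit X) :
    (Xᴴ * P * X).PosDef := by
  refine PosDef.of_dotProduct_mulVec_pos (isHermitian_conjTranspose_mul_mul X hP.1) fun x hx => ?_
  have hinj := mulVec_injective_iff_isUnit.mpr hX
  have hxX : X *ᵥ x ≠ 0 := fun h => hx (hinj (by simpa using h))
  simpa only [star_mulVec, dotProduct_mulVec, vecMul_vecMul] using hP.dotProduct_mulVec_pos hxX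

lemma matSqrt_posDef {A : Matrix (Fin n) (Fin n) ℂ} (hA : A.PosDef) :
    (matSqrt A).PosDef := by
  rw [matSqrt, hA.1.cfc_eq, Matrix.IsHermitian.cfc]
  set U : Matrix (Fin n) (Fin n) ℂ := ↑hA.1.eigenvectorUnitary with hU
  have hUU : U * star U = 1 := Matrix.mem_unitaryGroup_iff.mp hA.1.eigenvectorUnitary.2
  have hUU' : star U * U = 1 := Matrix.mem_unitaryGroup_iff'.mp hA.1.eigenvectorUnitary.2
  have hD : (diagonal (RCLike.ofReal ∘ Real.sqrt ∘ hA.1.eigenvalues) :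
      Matrix (Fin n) (Fin n) ℂ).PosDef := by
    rw [posDef_diagonal_iff]
    intro i
    simp only [Function.comp_apply]
    exact RCLike.ofReal_pos.mpr (Real.sqrt_pos.mpr (hA.eigenvalues_pos i))
  have hUnit : IsUnit (star U) := ⟨⟨star U, U, hUU', hUU⟩, rfl⟩
  have := conj_posDef hD hUnit
  simpa [star_eq_conjTranspose, conjTranspose_conjTranspose] using this

lemma matSqrt_isHermitian {A : Matrix (Fin n) (Fin n) ℂ} (hA : A.PosDef) :
    (matSqrt A).IsHermitian := (matSqrt_posDef hA).1
noncomputable def Kmat {n : ℕ} (l : ℝ) (A B : Matrix (Fin n) (Fin n) ℂ) :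
    Matrix (Fin n) (Fin n) ℂ :=
  (((1 - l : ℝ) : ℂ) • A⁻¹ + ((l : ℝ) : ℂ) • B⁻¹)⁻¹

variable {n : ℕ}

lemma psd_diag_re {W : Matrix (Fin n) (Fin n) ℂ} (hW : W.PosSemidef) (i : Fin n) :
    W i i = ((W i i).re : ℂ) ∧ 0 ≤ (W i i).re := by
  have h := hW.dotProduct_mulVec_nonneg (Pi.single i 1)
  have he : star (Pi.single i 1 : Fin n → ℂ) ⬝ᵥ (W *ᵥ Pi.single i 1) = W i i := by
    simp [dotProduct, mulVec_single, Pi.single_apply]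
  rw [he] at h
  rw [Complex.le_def] at h
  simp only [Complex.zero_re, Complex.zero_im] at h
  exact ⟨Complex.ext (Complex.ofReal_re _).symm (h.2.symm.trans (Complex.ofReal_im _).symm), h.1⟩

lemma trace_UDU (A U : Matrix (Fin n) (Fin n) ℂ) (r : Fin n → ℂ) :
    (A * (U * diagonal r * star U)).trace = ∑ i, r i * ((star U * A * U) i i) := by
  have h1 : A * (U * diagonal r * star U) = (A * U * diagonal r) * star U := by
    simp only [mul_assoc]
  rw [h1, trace_mul_comm, show star U * (A * U * diagonal r) = (star U * A * U) * diagonal r by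
    simp only [mul_assoc]]
  simp [Matrix.trace, Matrix.diag, mul_diagonal, mul_comm]

lemma trace_SXS {S A : Matrix (Fin n) (Fin n) ℂ} (hSS : S * S = A)
    (X : Matrix (Fin n) (Fin n) ℂ) : (S * X * S).trace = (A * X).trace := by
  rw [trace_mul_comm, ← mul_assoc, hSS]

section UDU
variable {U : Matrix (Fin n) (Fin n) ℂ}

lemma UDU_mul (hUU' : star U * U = 1) (a b : Fin n → ℂ) :
    (U * diagonal a * star U) * (U * diagonal b * star U)
      = U * diagonal (a * b) * star U :=
  calc (U * diagonal a * star U) * (U * diagonal b * star U)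
      = U * (diagonal a * ((star U * U) * (diagonal b * star U))) := by
        simp only [mul_assoc]
    _ = U * (diagonal a * (diagonal b * star U)) := by rw [hUU', one_mul]
    _ = U * ((diagonal a * diagonal b) * star U) := by rw [mul_assoc]
    _ = U * diagonal (a * b) * star U := by rw [diagonal_mul_diagonal, mul_assoc]; rfl

lemma UDU_add (a b : Fin n → ℂ) :
    (U * diagonal a * star U) + (U * diagonal b * star U)
      = U * diagonal (a + b) * star U := by
  rw [← add_mul, ← mul_add, diagonal_add]
  rfl

lemma UDU_smul (c : ℂ) (a : Fin n → ℂ) :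
    c • (U * diagonal a * star U) = U * diagonal (c • a) * star U := by
  rw [diagonal_smul, mul_smul_comm, smul_mul_assoc]

lemma UDU_one (hUU : U * star U = 1) :
    (1 : Matrix (Fin n) (Fin n) ℂ) = U * diagonal (fun _ => (1:ℂ)) * star U := by
  rw [show (diagonal (fun _ => (1:ℂ)) : Matrix (Fin n) (Fin n) ℂ) = 1 from diagonal_one,
    mul_one, hUU]
end UDU
lemma repr_lemma {A B : Matrix (Fin n) (Fin n) ℂ} (hA : A.PosDef) (hB : B.PosDef)
    (μ : Measure ℝ) :
    ∃ d w : Fin n → ℝ, (∀ i, 0 < d i) ∧ (∀ i, 0 ≤ w i) ∧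
      (∀ l ∈ Set.Icc (0:ℝ) 1,
        ((Kmat l A B).trace).re = ∑ i, (d i / ((1 - l) * d i + l)) * w i) ∧
      ((kuboAndo μ A B).trace).re = ∑ i, fmu μ (d i) * w i := by
  have hS : (matSqrt A).PosDef := matSqrt_posDef hA
  set S := matSqrt A with hSdef
  have hSdet : IsUnit S.det := (Matrix.isUnit_iff_isUnit_det S).mp hS.isUnit
  have hSS : S * S = A := matSqrt_mul_self hA
  have e1 : S * S⁻¹ = 1 := mul_nonsing_inv _ hSdet
  have e2 : S⁻¹ * S = 1 := nonsing_inv_mul _ hSdet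
  set C := S⁻¹ * B * S⁻¹ with hCdef
  have hSinvH : S⁻¹ᴴ = S⁻¹ := hS.1.inv
  have hSinvUnit : IsUnit (S⁻¹) := ⟨⟨S⁻¹, S, e2, e1⟩, rfl⟩
  have hC : C.PosDef := by
    have h1 := conj_posDef hB hSinvUnit
    rwa [hSinvH] at h1
  have hCH : C.IsHermitian := hC.1
  set U : Matrix (Fin n) (Fin n) ℂ := ↑hCH.eigenvectorUnitary with hUdef
  set d : Fin n → ℝ := hCH.eigenvalues with hddef
  have hUU : U * star U = 1 := mem_unitaryGroup_iff.mp hCH.eigenvectorUnitary.2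
  have hUU' : star U * U = 1 := mem_unitaryGroup_iff'.mp hCH.eigenvectorUnitary.2
  have hdpos : ∀ i, 0 < d i := fun i => hC.eigenvalues_pos i
  set W := star U * A * U with hWdef
  have hWpsd : W.PosSemidef := by
    have := hA.posSemidef.conjTranspose_mul_mul_same U
    rwa [← star_eq_conjTranspose] at this
  set w : Fin n → ℝ := fun i => (W i i).re with hwdef
  have hWi : ∀ i, W i i = ((w i : ℝ) : ℂ) := fun i => (psd_diag_re hWpsd i).1
  have key : ∀ r : Fin n → ℝ,
      ((S * (U * diagonal (fun i => ((r i : ℝ) : ℂ)) * star U) * S).trace).re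
        = ∑ i, r i * w i := by
    intro r
    rw [trace_SXS hSS, trace_UDU]
    have hc : (∑ i, (fun i => ((r i : ℝ) : ℂ)) i * (star U * A * U) i i)
        = ((∑ i, r i * w i : ℝ) : ℂ) := by
      rw [Complex.ofReal_sum]
      refine Finset.sum_congr rfl fun i _ => ?_
      rw [← hWdef, hWi i]
      push_cast
      ring
    rw [hc, Complex.ofReal_re]
  refine ⟨d, w, hdpos, fun i => (psd_diag_re hWpsd i).2, ?_, ?_⟩
  · -- Kmat trace formula
    intro l hl
    set g : Fin n → ℂ := fun i => ((1 - l : ℝ) : ℂ) + ((l : ℝ) : ℂ) * ((d i : ℝ) : ℂ)⁻¹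
      with hgdef
    set r : Fin n → ℂ := fun i => ((d i / ((1 - l) * d i + l) : ℝ) : ℂ) with hrdef
    have hden : ∀ i, 0 < (1 - l) * d i + l := by
      intro i
      rcases eq_or_lt_of_le hl.1 with h0 | h0
      · rw [← h0]; simpa using hdpos i
      · have h1 : 0 ≤ (1 - l) * d i := mul_nonneg (by linarith [hl.2]) (hdpos i).le
        linarith
    have hgr : (g * r : Fin n → ℂ) = fun _ => (1:ℂ) := by
      funext i
      show (((1 - l : ℝ) : ℂ) + ((l : ℝ) : ℂ) * ((d i : ℝ) : ℂ)⁻¹)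
          * ((d i / ((1 - l) * d i + l) : ℝ) : ℂ) = 1
      have hne1 : d i ≠ 0 := (hdpos i).ne'
      have hne2 : (1 - l) * d i + l ≠ 0 := (hden i).ne'
      have : ((1 - l) + l * (d i)⁻¹) * (d i / ((1 - l) * d i + l)) = (1:ℝ) := by
        field_simp
      calc (((1 - l : ℝ) : ℂ) + ((l : ℝ) : ℂ) * ((d i : ℝ) : ℂ)⁻¹)
          * ((d i / ((1 - l) * d i + l) : ℝ) : ℂ)
          = ((((1 - l) + l * (d i)⁻¹) * (d i / ((1 - l) * d i + l)) : ℝ) : ℂ) := by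
            push_cast; ring
        _ = 1 := by rw [this, Complex.ofReal_one]
    have hAinv : A⁻¹ = S⁻¹ * S⁻¹ := by rw [← hSS, Matrix.mul_inv_rev]
    have hCspec : C = U * diagonal (fun i => ((d i : ℝ) : ℂ)) * star U := hCH.spectral_theorem
    have hCinv : C⁻¹ = U * diagonal (fun i => ((d i : ℝ) : ℂ)⁻¹) * star U := by
      apply inv_eq_right_inv
      rw [hCspec, UDU_mul hUU', show ((fun i => ((d i : ℝ) : ℂ)) * fun i => ((d i : ℝ) : ℂ)⁻¹)
          = fun _ => (1:ℂ) from funext fun i =>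
            mul_inv_cancel₀ (by simpa using Complex.ofReal_ne_zero.mpr (hdpos i).ne')]
      exact (UDU_one hUU).symm
    have hBrep : S * C * S = B := by
      rw [hCdef]
      calc S * (S⁻¹ * B * S⁻¹) * S = (S * S⁻¹) * B * (S⁻¹ * S) := by simp only [mul_assoc]
        _ = B := by rw [e1, e2, one_mul, mul_one]
    have hBinv : B⁻¹ = S⁻¹ * C⁻¹ * S⁻¹ := by
      rw [← hBrep, Matrix.mul_inv_rev, Matrix.mul_inv_rev]
      simp only [mul_assoc]
    have hmid : ((1 - l : ℝ) : ℂ) • (U * diagonal (fun _ => (1:ℂ)) * star U)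
        + ((l : ℝ) : ℂ) • (U * diagonal (fun i => ((d i : ℝ) : ℂ)⁻¹) * star U)
        = U * diagonal g * star U := by
      rw [UDU_smul, UDU_smul, UDU_add]
      have harg : (((1 - l : ℝ) : ℂ) • (fun _ => (1:ℂ)) + ((l : ℝ) : ℂ) • fun i => ((d i : ℝ) : ℂ)⁻¹) = g := by
        funext i
        simp [hgdef]
      rw [harg]
    have expand : ∀ (c1 c2 : ℂ) (X1 X2 : Matrix (Fin n) (Fin n) ℂ),
        S⁻¹ * (c1 • X1 + c2 • X2) * S⁻¹
          = c1 • (S⁻¹ * X1 * S⁻¹) + c2 • (S⁻¹ * X2 * S⁻¹) := by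
      intro c1 c2 X1 X2
      rw [mul_add, add_mul, mul_smul_comm, mul_smul_comm, smul_mul_assoc, smul_mul_assoc]
    have hlhs : ((1 - l : ℝ) : ℂ) • A⁻¹ + ((l : ℝ) : ℂ) • B⁻¹
        = S⁻¹ * (U * diagonal g * star U) * S⁻¹ := by
      rw [← hmid, expand, ← UDU_one hUU, mul_one, ← hAinv, ← hCinv, ← hBinv]
    have hK : Kmat l A B = S * (U * diagonal r * star U) * S := by
      show (((1 - l : ℝ) : ℂ) • A⁻¹ + ((l : ℝ) : ℂ) • B⁻¹)⁻¹ = _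
      apply inv_eq_right_inv
      rw [hlhs]
      have step : (S⁻¹ * (U * diagonal g * star U) * S⁻¹) * (S * (U * diagonal r * star U) * S)
          = S⁻¹ * ((U * diagonal g * star U) * (U * diagonal r * star U)) * S := by
        calc (S⁻¹ * (U * diagonal g * star U) * S⁻¹) * (S * (U * diagonal r * star U) * S)
            = S⁻¹ * ((U * diagonal g * star U) * ((S⁻¹ * S) * ((U * diagonal r * star U) * S))) := by
              simp only [mul_assoc]
          _ = S⁻¹ * ((U * diagonal g * star U) * (U * diagonal r * star U)) * S := by
              rw [e2, one_mul]; simp only [mul_assoc]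
      rw [step, UDU_mul hUU', hgr, ← UDU_one hUU, mul_one, e2]
    rw [hK]
    exact key _
  · -- kuboAndo trace formula
    have hke : kuboAndo μ A B = S * cfc (fmu μ) C * S := rfl
    have hcfc : cfc (fmu μ) C
        = U * diagonal (fun i => ((fmu μ (d i) : ℝ) : ℂ)) * star U := by
      rw [hCH.cfc_eq]
      rfl
    rw [hke, hcfc]
    exact key _

lemma posDef_ofReal_smul {M : Matrix (Fin n) (Fin n) ℂ} {c : ℝ} (hc : 0 < c)
    (hM : M.PosDef) : (((c : ℝ) : ℂ) • M).PosDef := by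
  refine PosDef.of_dotProduct_mulVec_pos ?_ fun x hx => ?_
  · show (((c : ℝ) : ℂ) • M)ᴴ = ((c : ℝ) : ℂ) • M
    rw [conjTranspose_smul, hM.1]
    congr 1
    simp [Complex.star_def, Complex.conj_ofReal]
  · have h := hM.dotProduct_mulVec_pos hx
    rw [smul_mulVec, dotProduct_smul]
    rw [Complex.lt_def] at h ⊢
    constructor
    · have : (((c:ℝ):ℂ) • (star x ⬝ᵥ M *ᵥ x)).re = c * (star x ⬝ᵥ M *ᵥ x).re := by
        rw [smul_eq_mul, Complex.re_ofReal_mul]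
      rw [this]
      simp only [Complex.zero_re] at h ⊢
      exact mul_pos hc h.1
    · have : (((c:ℝ):ℂ) • (star x ⬝ᵥ M *ᵥ x)).im = c * (star x ⬝ᵥ M *ᵥ x).im := by
        rw [smul_eq_mul, Complex.im_ofReal_mul]
      rw [this]
      simp only [Complex.zero_im] at h ⊢
      rw [← h.2]
      ring

lemma matSmul_inv {M : Matrix (Fin n) (Fin n) ℂ} (hM : IsUnit M.det) {c : ℂ} (hc : c ≠ 0) :
    (c • M)⁻¹ = c⁻¹ • M⁻¹ := by
  apply inv_eq_right_inv
  rw [smul_mul_smul_comm, mul_inv_cancel₀ hc, mul_nonsing_inv _ hM, one_smul]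

lemma Kmat_zero {A B : Matrix (Fin n) (Fin n) ℂ} (hA : A.PosDef) : Kmat 0 A B = A := by
  rw [Kmat]
  norm_num
  exact nonsing_inv_nonsing_inv A ((Matrix.isUnit_iff_isUnit_det A).mp hA.isUnit)

lemma Kmat_one {A B : Matrix (Fin n) (Fin n) ℂ} (hB : B.PosDef) : Kmat 1 A B = B := by
  rw [Kmat]
  norm_num
  exact nonsing_inv_nonsing_inv B ((Matrix.isUnit_iff_isUnit_det B).mp hB.isUnit)

lemma psd_trace_re_nonneg {M : Matrix (Fin n) (Fin n) ℂ} (hM : M.PosSemidef) :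
    0 ≤ (M.trace).re := by
  rw [Matrix.trace, Complex.re_sum]
  exact Finset.sum_nonneg fun i _ => (psd_diag_re hM i).2

lemma VPV_entry (P : Matrix (Fin n) (Fin n) ℂ) (X : Fin 2 → Matrix (Fin n) (Fin n) ℂ) :
    (Matrix.of fun i (q : Fin n × Fin 2) => X q.2 i q.1)ᴴ * P *
      (Matrix.of fun i (q : Fin n × Fin 2) => X q.2 i q.1)
      = Matrix.of fun p q => ((X p.2)ᴴ * P * (X q.2)) p.1 q.1 := by
  ext p q
  simp [mul_apply, conjTranspose_apply]

lemma YNY (N : Matrix (Fin n × Fin 2) (Fin n × Fin 2) ℂ) (Z : Fin 2 → Matrix (Fin n) (Fin n) ℂ) :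
    (Matrix.of fun (p : Fin n × Fin 2) j => Z p.2 p.1 j)ᴴ * N *
      (Matrix.of fun (p : Fin n × Fin 2) j => Z p.2 p.1 j)
      = ∑ s : Fin 2, ∑ t : Fin 2,
          (Z s)ᴴ * (Matrix.of fun a b => N (a, s) (b, t)) * (Z t) := by
  ext i j
  simp only [Matrix.sum_apply, mul_apply, conjTranspose_apply, Matrix.of_apply,
    Fintype.sum_prod_type, Finset.sum_mul]
  have h1 : ∀ (F : Fin 2 → Fin n → Fin n → Fin 2 → ℂ),
      (∑ b : Fin n, ∑ t : Fin 2, ∑ a : Fin n, ∑ s : Fin 2, F s a b t)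
        = ∑ s : Fin 2, ∑ t : Fin 2, ∑ b : Fin n, ∑ a : Fin n, F s a b t := by
    intro F
    calc (∑ b : Fin n, ∑ t : Fin 2, ∑ a : Fin n, ∑ s : Fin 2, F s a b t)
        = ∑ b : Fin n, ∑ t : Fin 2, ∑ s : Fin 2, ∑ a : Fin n, F s a b t :=
          Finset.sum_congr rfl fun b _ => Finset.sum_congr rfl fun t _ => Finset.sum_comm
      _ = ∑ b : Fin n, ∑ s : Fin 2, ∑ t : Fin 2, ∑ a : Fin n, F s a b t :=
          Finset.sum_congr rfl fun b _ => Finset.sum_comm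
      _ = ∑ s : Fin 2, ∑ b : Fin n, ∑ t : Fin 2, ∑ a : Fin n, F s a b t := Finset.sum_comm
      _ = ∑ s : Fin 2, ∑ t : Fin 2, ∑ b : Fin n, ∑ a : Fin n, F s a b t :=
          Finset.sum_congr rfl fun s _ => Finset.sum_comm
  exact h1 fun s a b t => star (Z s a i) * N (a, s) (b, t) * Z t b j

lemma Kmat_trace_mono
    (T : Matrix (Fin n) (Fin n) ℂ →ₗ[ℂ] Matrix (Fin n) (Fin n) ℂ)
    (hCP : IsCompletelyPositive T)
    (hTP : ∀ X : Matrix (Fin n) (Fin n) ℂ, (T X).trace = X.trace)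
    (hPD : ∀ X : Matrix (Fin n) (Fin n) ℂ, X.PosDef → (T X).PosDef)
    {A B : Matrix (Fin n) (Fin n) ℂ} (hA : A.PosDef) (hB : B.PosDef)
    {l : ℝ} (hl : l ∈ Set.Icc (0:ℝ) 1) :
    ((Kmat l A B).trace).re ≤ ((Kmat l (T A) (T B)).trace).re := by
  obtain ⟨hl0, hl1⟩ := hl
  rcases eq_or_lt_of_le hl0 with h0 | h0
  · rw [← h0, Kmat_zero hA, Kmat_zero (hPD A hA), hTP A]
  rcases eq_or_lt_of_le hl1 with h1 | h1
  · rw [h1, Kmat_one hB, Kmat_one (hPD B hB), hTP B]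
  have hA' : (T A).PosDef := hPD A hA
  have hB' : (T B).PosDef := hPD B hB
  have hl1' : 0 < 1 - l := by linarith
  set c1 : ℂ := (((1 - l)⁻¹ : ℝ) : ℂ) with hc1
  set c2 : ℂ := ((l⁻¹ : ℝ) : ℂ) with hc2
  have hc1inv : c1⁻¹ = ((1 - l : ℝ) : ℂ) := by
    rw [hc1, Complex.ofReal_inv, inv_inv]
  have hc2inv : c2⁻¹ = ((l : ℝ) : ℂ) := by
    rw [hc2, Complex.ofReal_inv, inv_inv]
  have hc1ne : c1 ≠ 0 := by
    rw [hc1]; exact_mod_cast Complex.ofReal_ne_zero.mpr (inv_pos.mpr hl1').ne'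
  have hc2ne : c2 ≠ 0 := by
    rw [hc2]; exact_mod_cast Complex.ofReal_ne_zero.mpr (inv_pos.mpr h0).ne'
  -- the general interior argument, for any posdef pair (for reuse, do it inline twice via a claim)
  -- unprimed data
  set A₁ := c1 • A with hA₁def
  set A₂ := c2 • B with hA₂def
  have hA₁ : A₁.PosDef := posDef_ofReal_smul (inv_pos.mpr hl1') hA
  have hA₂ : A₂.PosDef := posDef_ofReal_smul (inv_pos.mpr h0) hB
  have hA₁inv : A₁⁻¹ = ((1 - l : ℝ) : ℂ) • A⁻¹ := by
    rw [hA₁def, matSmul_inv ((Matrix.isUnit_iff_isUnit_det A).mp hA.isUnit) hc1ne, hc1inv]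
  have hA₂inv : A₂⁻¹ = ((l : ℝ) : ℂ) • B⁻¹ := by
    rw [hA₂def, matSmul_inv ((Matrix.isUnit_iff_isUnit_det B).mp hB.isUnit) hc2ne, hc2inv]
  set Q := A₁⁻¹ + A₂⁻¹ with hQdef
  have hQ : Q.PosDef := hA₁.inv.add hA₂.inv
  have hKQ : Kmat l A B = Q⁻¹ := by rw [Kmat, hQdef, hA₁inv, hA₂inv]
  set K := Q⁻¹ with hKdef
  set Sm := A₁ + A₂ with hSmdef
  have hSm : Sm.PosDef := hA₁.add hA₂
  set P := Sm⁻¹ with hPdef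
  have hP : P.PosDef := hSm.inv
  have hSmdet : IsUnit Sm.det := (Matrix.isUnit_iff_isUnit_det Sm).mp hSm.isUnit
  have hPS : P * Sm = 1 := nonsing_inv_mul _ hSmdet
  have hSP : Sm * P = 1 := mul_nonsing_inv _ hSmdet
  have hA₁c : A₁⁻¹ * A₁ = 1 := nonsing_inv_mul _ ((Matrix.isUnit_iff_isUnit_det A₁).mp hA₁.isUnit)
  have hA₂c : A₂⁻¹ * A₂ = 1 := nonsing_inv_mul _ ((Matrix.isUnit_iff_isUnit_det A₂).mp hA₂.isUnit)
  have idK : A₁ * P * A₂ = K := by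
    refine (inv_eq_right_inv ?_).symm
    calc Q * (A₁ * P * A₂)
        = A₁⁻¹ * (A₁ * (P * A₂)) + A₂⁻¹ * (A₁ * (P * A₂)) := by
          rw [hQdef, add_mul]; simp only [mul_assoc]
      _ = P * A₂ + A₂⁻¹ * (A₁ * (P * A₂)) := by rw [← mul_assoc A₁⁻¹ A₁, hA₁c, one_mul]
      _ = A₂⁻¹ * (A₂ * (P * A₂)) + A₂⁻¹ * (A₁ * (P * A₂)) := by
          rw [← mul_assoc A₂⁻¹ A₂, hA₂c, one_mul]
      _ = A₂⁻¹ * ((A₂ + A₁) * (P * A₂)) := by rw [← mul_add, ← add_mul]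
      _ = A₂⁻¹ * (Sm * (P * A₂)) := by rw [add_comm A₂ A₁, ← hSmdef]
      _ = A₂⁻¹ * A₂ := by rw [← mul_assoc Sm P, hSP, one_mul]
      _ = 1 := hA₂c
  have idK2 : A₂ * P * A₁ = K := by
    refine (inv_eq_right_inv ?_).symm
    calc Q * (A₂ * P * A₁)
        = A₁⁻¹ * (A₂ * (P * A₁)) + A₂⁻¹ * (A₂ * (P * A₁)) := by
          rw [hQdef, add_mul]; simp only [mul_assoc]
      _ = A₁⁻¹ * (A₂ * (P * A₁)) + A₁⁻¹ * (A₁ * (P * A₁)) := by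
          rw [← mul_assoc A₂⁻¹ A₂, hA₂c, one_mul, ← mul_assoc A₁⁻¹ A₁, hA₁c, one_mul]
      _ = A₁⁻¹ * ((A₂ + A₁) * (P * A₁)) := by rw [← mul_add, ← add_mul]
      _ = A₁⁻¹ * (Sm * (P * A₁)) := by rw [add_comm A₂ A₁, ← hSmdef]
      _ = A₁⁻¹ * A₁ := by rw [← mul_assoc Sm P, hSP, one_mul]
      _ = 1 := hA₁c
  have id1 : A₁ * P * A₁ = A₁ - K := by
    have e : A₁ * P * A₁ + A₁ * P * A₂ = A₁ := by
      rw [← mul_add (A₁ * P), ← hSmdef, mul_assoc, hPS, mul_one]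
    rw [← idK]
    exact eq_sub_of_add_eq e
  have id2 : A₂ * P * A₂ = A₂ - K := by
    have e : A₂ * P * A₁ + A₂ * P * A₂ = A₂ := by
      rw [← mul_add (A₂ * P), ← hSmdef, mul_assoc, hPS, mul_one]
    rw [← idK2]
    exact eq_sub_of_add_eq' e
  set X : Fin 2 → Matrix (Fin n) (Fin n) ℂ := ![A₁, -A₂] with hXdef
  have hb00 : (X 0)ᴴ * P * (X 0) = A₁ - K := by
    rw [hXdef]; simp only [Matrix.cons_val_zero]; rw [hA₁.1]; exact id1
  have hb01 : (X 0)ᴴ * P * (X 1) = -K := by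
    rw [hXdef]; simp only [Matrix.cons_val_zero, Matrix.cons_val_one, Matrix.head_cons]
    rw [hA₁.1, mul_neg, idK]
  have hb10 : (X 1)ᴴ * P * (X 0) = -K := by
    rw [hXdef]; simp only [Matrix.cons_val_zero, Matrix.cons_val_one, Matrix.head_cons]
    rw [conjTranspose_neg, hA₂.1, neg_mul, neg_mul, idK2]
  have hb11 : (X 1)ᴴ * P * (X 1) = A₂ - K := by
    rw [hXdef]; simp only [Matrix.cons_val_zero, Matrix.cons_val_one, Matrix.head_cons]
    rw [conjTranspose_neg, hA₂.1, neg_mul, neg_mul, mul_neg, neg_neg, id2]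
  set M : Matrix (Fin n × Fin 2) (Fin n × Fin 2) ℂ :=
    Matrix.of fun p q => ((X p.2)ᴴ * P * (X q.2)) p.1 q.1 with hMdef
  have hMpsd : M.PosSemidef := by
    rw [hMdef, ← VPV_entry P X]
    exact hP.posSemidef.conjTranspose_mul_mul_same _
  have hN : (tensorId T 2 M).PosSemidef := hCP 2 M hMpsd
  have hblock : ∀ s t : Fin 2,
      (Matrix.of fun a b => tensorId T 2 M (a, s) (b, t)) = T ((X s)ᴴ * P * (X t)) := by
    intro s t
    rfl
  -- primed side
  set A₁' := c1 • (T A) with hA₁'def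
  set A₂' := c2 • (T B) with hA₂'def
  have hA₁' : A₁'.PosDef := posDef_ofReal_smul (inv_pos.mpr hl1') hA'
  have hA₂' : A₂'.PosDef := posDef_ofReal_smul (inv_pos.mpr h0) hB'
  have hA₁'inv : A₁'⁻¹ = ((1 - l : ℝ) : ℂ) • (T A)⁻¹ := by
    rw [hA₁'def, matSmul_inv ((Matrix.isUnit_iff_isUnit_det _).mp hA'.isUnit) hc1ne, hc1inv]
  have hA₂'inv : A₂'⁻¹ = ((l : ℝ) : ℂ) • (T B)⁻¹ := by
    rw [hA₂'def, matSmul_inv ((Matrix.isUnit_iff_isUnit_det _).mp hB'.isUnit) hc2ne, hc2inv]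
  set Q' := A₁'⁻¹ + A₂'⁻¹ with hQ'def
  have hQ' : Q'.PosDef := hA₁'.inv.add hA₂'.inv
  have hKQ' : Kmat l (T A) (T B) = Q'⁻¹ := by rw [Kmat, hQ'def, hA₁'inv, hA₂'inv]
  set K' := Q'⁻¹ with hK'def
  have hK' : K'.PosDef := hQ'.inv
  have hQ'K : Q' * K' = 1 := mul_nonsing_inv _ ((Matrix.isUnit_iff_isUnit_det Q').mp hQ'.isUnit)
  have hK'Q : K' * Q' = 1 := nonsing_inv_mul _ ((Matrix.isUnit_iff_isUnit_det Q').mp hQ'.isUnit)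
  have hA₁'c : A₁'⁻¹ * A₁' = 1 :=
    nonsing_inv_mul _ ((Matrix.isUnit_iff_isUnit_det A₁').mp hA₁'.isUnit)
  have hA₂'c : A₂'⁻¹ * A₂' = 1 :=
    nonsing_inv_mul _ ((Matrix.isUnit_iff_isUnit_det A₂').mp hA₂'.isUnit)
  set Z : Fin 2 → Matrix (Fin n) (Fin n) ℂ := ![A₁'⁻¹ * K', A₂'⁻¹ * K'] with hZdef
  have hZ01 : Z 0 + Z 1 = 1 := by
    rw [hZdef]; simp only [Matrix.cons_val_zero, Matrix.cons_val_one, Matrix.head_cons]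
    rw [← add_mul, ← hQ'def]
    exact hQ'K
  have zh0 : (Z 0)ᴴ = K' * A₁'⁻¹ := by
    rw [hZdef]; simp only [Matrix.cons_val_zero]
    rw [conjTranspose_mul, hK'.1, hA₁'.1.inv]
  have zh1 : (Z 1)ᴴ = K' * A₂'⁻¹ := by
    rw [hZdef]; simp only [Matrix.cons_val_zero, Matrix.cons_val_one, Matrix.head_cons]
    rw [conjTranspose_mul, hK'.1, hA₂'.1.inv]
  have hTA₁ : T A₁ = A₁' := by rw [hA₁def, hA₁'def]; exact T.map_smul c1 A
  have hTA₂ : T A₂ = A₂' := by rw [hA₂def, hA₂'def]; exact T.map_smul c2 B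
  -- auxiliary products
  have haux0 : (Z 0)ᴴ * A₁' * Z 0 = K' * A₁'⁻¹ * K' := by
    rw [zh0, hZdef]; simp only [Matrix.cons_val_zero]
    calc K' * A₁'⁻¹ * A₁' * (A₁'⁻¹ * K')
        = K' * (A₁'⁻¹ * A₁') * (A₁'⁻¹ * K') := by simp only [mul_assoc]
      _ = K' * (A₁'⁻¹ * K') := by rw [hA₁'c, mul_one]
      _ = K' * A₁'⁻¹ * K' := by rw [mul_assoc]
  have haux1 : (Z 1)ᴴ * A₂' * Z 1 = K' * A₂'⁻¹ * K' := by
    rw [zh1, hZdef]; simp only [Matrix.cons_val_one, Matrix.head_cons]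
    calc K' * A₂'⁻¹ * A₂' * (A₂'⁻¹ * K')
        = K' * (A₂'⁻¹ * A₂') * (A₂'⁻¹ * K') := by simp only [mul_assoc]
      _ = K' * (A₂'⁻¹ * K') := by rw [hA₂'c, mul_one]
      _ = K' * A₂'⁻¹ * K' := by rw [mul_assoc]
  have hKQK : K' * A₁'⁻¹ * K' + K' * A₂'⁻¹ * K' = K' := by
    calc K' * A₁'⁻¹ * K' + K' * A₂'⁻¹ * K'
        = K' * (A₁'⁻¹ + A₂'⁻¹) * K' := by rw [mul_add, add_mul]
      _ = K' * Q' * K' := by rw [← hQ'def]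
      _ = K' := by rw [hK'Q, one_mul]
  have hTKsum : (Z 0)ᴴ * T K * Z 0 + (Z 0)ᴴ * T K * Z 1 + (Z 1)ᴴ * T K * Z 0
      + (Z 1)ᴴ * T K * Z 1 = T K := by
    have expand : (Z 0)ᴴ * T K * Z 0 + (Z 0)ᴴ * T K * Z 1 + (Z 1)ᴴ * T K * Z 0
        + (Z 1)ᴴ * T K * Z 1 = ((Z 0)ᴴ + (Z 1)ᴴ) * T K * (Z 0 + Z 1) := by
      noncomm_ring
    rw [expand, ← conjTranspose_add, hZ01, conjTranspose_one, one_mul, mul_one]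
  -- the main factorization
  have hfact := YNY (tensorId T 2 M) Z
  have hsum : (∑ s : Fin 2, ∑ t : Fin 2,
      (Z s)ᴴ * (Matrix.of fun a b => tensorId T 2 M (a, s) (b, t)) * (Z t)) = K' - T K := by
    simp only [hblock]
    rw [Fin.sum_univ_two, Fin.sum_univ_two, Fin.sum_univ_two]
    rw [hb00, hb01, hb10, hb11, map_sub, map_sub, map_neg, hTA₁, hTA₂]
    calc (Z 0)ᴴ * (A₁' - T K) * Z 0 + (Z 0)ᴴ * (-(T K)) * Z 1
          + ((Z 1)ᴴ * (-(T K)) * Z 0 + (Z 1)ᴴ * (A₂' - T K) * Z 1)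
        = ((Z 0)ᴴ * A₁' * Z 0 + (Z 1)ᴴ * A₂' * Z 1)
          - ((Z 0)ᴴ * T K * Z 0 + (Z 0)ᴴ * T K * Z 1 + (Z 1)ᴴ * T K * Z 0
             + (Z 1)ᴴ * T K * Z 1) := by noncomm_ring
      _ = (K' * A₁'⁻¹ * K' + K' * A₂'⁻¹ * K') - T K := by rw [haux0, haux1, hTKsum]
      _ = K' - T K := by rw [hKQK]
  have hPSD : (K' - T K).PosSemidef := by
    have h := hN.conjTranspose_mul_mul_same (Matrix.of fun (p : Fin n × Fin 2) j => Z p.2 p.1 j)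
    rw [hfact, hsum] at h
    exact h
  have htr := psd_trace_re_nonneg hPSD
  rw [trace_sub, Complex.sub_re] at htr
  have hTK : ((T K).trace).re = (K.trace).re := by rw [hTP K]
  rw [hKQ, hKQ']
  rw [hTK] at htr
  linarith

lemma ae_Icc (μ : Measure ℝ) [IsProbabilityMeasure μ] (hμ01 : μ (Set.Icc (0 : ℝ) 1) = 1) :
    ∀ᵐ l ∂μ, l ∈ Set.Icc (0:ℝ) 1 := by
  rw [MeasureTheory.ae_iff]
  have h : {a : ℝ | ¬ a ∈ Set.Icc (0:ℝ) 1} = (Set.Icc (0:ℝ) 1)ᶜ := rfl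
  rw [h]
  exact (prob_compl_eq_zero_iff measurableSet_Icc).mpr hμ01

lemma fl_bound {x l : ℝ} (hx : 0 < x) (hl : l ∈ Set.Icc (0:ℝ) 1) :
    |x / ((1 - l) * x + l)| ≤ max x 1 := by
  obtain ⟨hl0, hl1⟩ := hl
  have hden : 0 < (1 - l) * x + l := by
    rcases eq_or_lt_of_le hl0 with h0 | h0
    · rw [← h0]; simpa using hx
    · have : 0 ≤ (1 - l) * x := mul_nonneg (by linarith) hx.le
      linarith
  rw [abs_of_nonneg (div_nonneg hx.le hden.le)]
  rcases le_total x 1 with h | h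
  · have hxle : x ≤ (1 - l) * x + l := by nlinarith
    exact le_trans ((div_le_one hden).mpr hxle) (le_max_right _ _)
  · have h1le : (1:ℝ) ≤ (1 - l) * x + l := by nlinarith
    have h2 : x / ((1 - l) * x + l) ≤ x / 1 := by
      gcongr
    rw [div_one] at h2
    exact h2.trans (le_max_left x 1)

lemma fl_integrable (μ : Measure ℝ) [IsProbabilityMeasure μ]
    (hμ01 : μ (Set.Icc (0 : ℝ) 1) = 1) {x : ℝ} (hx : 0 < x) :
    Integrable (fun l => x / ((1 - l) * x + l)) μ := by
  have hmeas : Measurable fun l : ℝ => x / ((1 - l) * x + l) :=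
    measurable_const.div (((measurable_const.sub measurable_id).mul measurable_const).add
      measurable_id)
  refine (integrable_const (max x 1)).mono' hmeas.aestronglyMeasurable ?_
  filter_upwards [ae_Icc μ hμ01] with l hl
  rw [Real.norm_eq_abs]
  exact fl_bound hx hl


/-- **data processing inequality.** If `T` is a quantum channel (completely
positive, trace preserving) mapping positive definite matrices to positive definite matrices,
then `φ_μ(T(A), T(B)) ≤ φ_μ(A, B)` for all positive definite `A, B`. -/
theorem qhd_data_processing {n : ℕ} (μ : Measure ℝ) [IsProbabilityMeasure μ]
    (hμ01 : μ (Set.Icc (0 : ℝ) 1) = 1)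
    (T : Matrix (Fin n) (Fin n) ℂ →ₗ[ℂ] Matrix (Fin n) (Fin n) ℂ)
    (hCP : IsCompletelyPositive T)
    (hTP : ∀ X : Matrix (Fin n) (Fin n) ℂ, (T X).trace = X.trace)
    (hPD : ∀ X : Matrix (Fin n) (Fin n) ℂ, X.PosDef → (T X).PosDef)
    (A B : Matrix (Fin n) (Fin n) ℂ) (hA : A.PosDef) (hB : B.PosDef) :
    qhd μ (T A) (T B) ≤ qhd μ A B := by
  obtain ⟨d, w, hd, hw, hKtr, hkb⟩ := repr_lemma hA hB μ
  obtain ⟨d', w', hd', hw', hKtr', hkb'⟩ := repr_lemma (hPD A hA) (hPD B hB) μ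
  have hint : ∀ (d w : Fin n → ℝ), (∀ i, 0 < d i) →
      Integrable (fun l => ∑ i, (d i / ((1 - l) * d i + l)) * w i) μ := fun d w hd =>
    integrable_finset_sum _ fun i _ => (fl_integrable μ hμ01 (hd i)).mul_const (w i)
  have hval : ∀ (d w : Fin n → ℝ), (∀ i, 0 < d i) →
      (∫ l, (∑ i, (d i / ((1 - l) * d i + l)) * w i) ∂μ) = ∑ i, fmu μ (d i) * w i := by
    intro d w hd
    rw [integral_finset_sum _ fun i _ => (fl_integrable μ hμ01 (hd i)).mul_const (w i)]
    exact Finset.sum_congr rfl fun i _ => integral_mul_const (w i) _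
  have hmain : ((kuboAndo μ A B).trace).re ≤ ((kuboAndo μ (T A) (T B)).trace).re := by
    rw [hkb, hkb', ← hval d w hd, ← hval d' w' hd']
    refine integral_mono_ae (hint d w hd) (hint d' w' hd') ?_
    filter_upwards [ae_Icc μ hμ01] with l hl
    rw [← hKtr l hl, ← hKtr' l hl]
    exact Kmat_trace_mono T hCP hTP hPD hA hB hl
  rw [qhd, qhd]
  have hTrA : (T A).trace = A.trace := hTP A
  have hTrB : (T B).trace = B.trace := hTP B
  simp only [trace_sub, trace_add, trace_smul, hTrA, hTrB, Complex.sub_re, Complex.add_re]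
  have hre : ∀ (r : ℝ) (z : ℂ), (r • z).re = r * z.re := by
    intro r z
    rw [Complex.real_smul, Complex.re_ofReal_mul]
  rw [hre, hre]
  linarith
end

section
/- Let μ be a Borel probability measure on [0,1]. Then f_μ is differentiable on (0,∞) and its derivative is given by f_μ'(x) = ∫_{[0,1]} λ/((1-λ)x+λ)² dμ(λ) for every x > 0. -/
open MeasureTheory

private lemma denom_ge {l x : ℝ} (hl : l ∈ Set.Icc (0:ℝ) 1) (hx : 0 < x) :
    min x 1 ≤ (1 - l) * x + l := by
  obtain ⟨h0, h1⟩ := hl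
  rcases le_total x 1 with h | h
  · rw [min_eq_left h]; nlinarith
  · rw [min_eq_right h]; nlinarith

/-- `f_μ` is differentiable on `(0,∞)` with
`f_μ'(x) = ∫_{[0,1]} λ/((1-λ)x+λ)² dμ(λ)`. -/
theorem fmu_hasDerivAt (μ : Measure ℝ) [IsProbabilityMeasure μ]
    (hμ01 : μ (Set.Icc (0 : ℝ) 1) = 1) :
    ∀ x : ℝ, 0 < x → HasDerivAt (fmu μ) (∫ l, l / ((1 - l) * x + l) ^ 2 ∂μ) x := by
  intro x hx
  have hae : ∀ᵐ l ∂μ, l ∈ Set.Icc (0:ℝ) 1 := by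
    exact mem_ae_iff.mpr ((prob_compl_eq_zero_iff measurableSet_Icc).2 hμ01)
  set δ : ℝ := min (x/2) 1 with hδdef
  have hδ : 0 < δ := lt_min (by linarith) one_pos
  set δ₀ : ℝ := min x 1 with hδ₀def
  have hδ₀ : 0 < δ₀ := lt_min hx one_pos
  have hball : ∀ y ∈ Metric.ball x (x/2), ∀ l ∈ Set.Icc (0:ℝ) 1,
      δ ≤ (1 - l) * y + l ∧ 0 < y := by
    intro y hy l hl
    rw [Metric.mem_ball, Real.dist_eq, abs_lt] at hy
    have hy' : x/2 < y := by linarith [hy.1]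
    have hypos : 0 < y := by linarith
    refine ⟨le_trans ?_ (denom_ge hl hypos), hypos⟩
    exact min_le_min hy'.le le_rfl
  have key := hasDerivAt_integral_of_dominated_loc_of_deriv_le (μ := μ)
    (F := fun y l => y / ((1 - l) * y + l)) (F' := fun y l => l / ((1 - l) * y + l) ^ 2)
    (x₀ := x) (bound := fun _ => 1 / δ ^ 2) (s := Metric.ball x (x/2))
    (Metric.ball_mem_nhds x (by linarith))
    (Filter.Eventually.of_forall fun y =>
      (Measurable.aestronglyMeasurable (by fun_prop)))
    ?_ (Measurable.aestronglyMeasurable (by fun_prop)) ?_ (integrable_const _) ?_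
  · exact key.2
  · -- integrability of F x
    refine (integrable_const (x / δ₀)).mono' (Measurable.aestronglyMeasurable (by fun_prop)) ?_
    filter_upwards [hae] with l hl
    have hd : δ₀ ≤ (1 - l) * x + l := denom_ge hl hx
    have hdpos : 0 < (1 - l) * x + l := lt_of_lt_of_le hδ₀ hd
    rw [Real.norm_eq_abs, abs_of_nonneg (div_nonneg hx.le hdpos.le)]
    rw [div_le_div_iff₀ hdpos hδ₀]
    nlinarith
  · -- bound
    filter_upwards [hae] with l hl
    intro y hy
    obtain ⟨hd, hypos⟩ := hball y hy l hl
    have hdpos : 0 < (1 - l) * y + l := lt_of_lt_of_le hδ hd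
    rw [Real.norm_eq_abs, abs_of_nonneg (div_nonneg hl.1 (sq_nonneg _))]
    rw [div_le_div_iff₀ (by positivity) (by positivity)]
    nlinarith [hl.1, hl.2, sq_nonneg ((1 - l) * y + l - δ)]
  · -- differentiability
    filter_upwards [hae] with l hl
    intro y hy
    obtain ⟨hd, hypos⟩ := hball y hy l hl
    have hdpos : 0 < (1 - l) * y + l := lt_of_lt_of_le hδ hd
    have hden : HasDerivAt (fun y => (1 - l) * y + l) (1 - l) y := by
      simpa using ((hasDerivAt_id y).const_mul (1 - l)).add_const l
    have h := (hasDerivAt_id y).div hden hdpos.ne'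
    refine h.congr_deriv ?_
    simp only [id_eq]
    rw [div_eq_div_iff (by positivity) (by positivity)]
    ring
end
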